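/- Let b, n ∈ ℕ, let ≺ be a linear order on the vertex set of S_b □ H_n, and let L₂ be a set of c leaves of S_b. Then there exists a sequence u₁, …, u_d of distinct leaves in L₂ with d^{2^{n²−1}} ≥ c (i.e. d ≥ c^{1/2^{n²−1}}) such that for every vertex p of H_n, either (u₁,p) ≺ (u₂,p) ≺ ⋯ ≺ (u_d,p), or (u₁,p) ≻ (u₂,p) ≻ ⋯ ≻ (u_d,p). -/

import Mathlib

open SimpleGraph

/-- Two (unordered) pairs of vertices cross with respect to the strict order `lt`:
with `e = {v,w}`, `f = {x,y}`, `v ≺ w`, `x ≺ y`, they cross if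
`v ≺ x ≺ w ≺ y` or `x ≺ v ≺ y ≺ w`. -/
def Cross {V : Type*} (lt : V → V → Prop) (e f : Sym2 V) : Prop :=
  ∃ v w x y : V, e = s(v, w) ∧ f = s(x, y) ∧
    ((lt v x ∧ lt x w ∧ lt w y) ∨ (lt x v ∧ lt v y ∧ lt y w))

/-- Two (unordered) pairs of vertices nest with respect to the strict order `lt`:
with `e = {v,w}`, `f = {x,y}`, `v ≺ w`, `x ≺ y`, they nest if
`v ≺ x ≺ y ≺ w` or `x ≺ v ≺ w ≺ y`. -/
def Nest {V : Type*} (lt : V → V → Prop) (e f : Sym2 V) : Prop :=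
  ∃ v w x y : V, e = s(v, w) ∧ f = s(x, y) ∧
    ((lt v x ∧ lt x y ∧ lt y w) ∨ (lt x v ∧ lt v w ∧ lt w y))

/-- `(lt, φ)` is a `k`-stack layout of `G`: `lt` is a linear (strict total) order on the
vertices and no two edges with the same colour cross. -/
def IsStackLayout {V : Type*} {k : ℕ} (G : SimpleGraph V)
    (lt : V → V → Prop) (φ : Sym2 V → Fin k) : Prop :=
  IsStrictTotalOrder V lt ∧
    ∀ e ∈ G.edgeSet, ∀ f ∈ G.edgeSet, φ e = φ f → ¬ Cross lt e f

/-- `(lt, φ)` is a `k`-queue layout of `G`: `lt` is a linear (strict total) order on the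
vertices and no two edges with the same colour nest. -/
def IsQueueLayout {V : Type*} {k : ℕ} (G : SimpleGraph V)
    (lt : V → V → Prop) (φ : Sym2 V → Fin k) : Prop :=
  IsStrictTotalOrder V lt ∧
    ∀ e ∈ G.edgeSet, ∀ f ∈ G.edgeSet, φ e = φ f → ¬ Nest lt e f

/-- The stack-number of `G`: the least `k` such that `G` has a `k`-stack layout. -/
noncomputable def stackNumber {V : Type*} (G : SimpleGraph V) : ℕ :=
  sInf {k | ∃ (lt : V → V → Prop) (φ : Sym2 V → Fin k), IsStackLayout G lt φ}

/-- The queue-number of `G`: the least `k` such that `G` has a `k`-queue layout. -/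
noncomputable def queueNumber {V : Type*} (G : SimpleGraph V) : ℕ :=
  sInf {k | ∃ (lt : V → V → Prop) (φ : Sym2 V → Fin k), IsQueueLayout G lt φ}

/-- A queue layout is strict if for every vertex `u` and neighbours `v, w` of `u` with
`u ≺ v ≺ w` or `v ≺ w ≺ u`, the edges `uv` and `uw` get different colours. -/
def IsStrictQueueLayout {V : Type*} {k : ℕ} (G : SimpleGraph V)
    (lt : V → V → Prop) (φ : Sym2 V → Fin k) : Prop :=
  IsQueueLayout G lt φ ∧
    ∀ u v w : V, G.Adj u v → G.Adj u w →
      ((lt u v ∧ lt v w) ∨ (lt v w ∧ lt w u)) → φ s(u, v) ≠ φ s(u, w)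

/-- The strict queue-number of `G`. -/
noncomputable def strictQueueNumber {V : Type*} (G : SimpleGraph V) : ℕ :=
  sInf {k | ∃ (lt : V → V → Prop) (φ : Sym2 V → Fin k), IsStrictQueueLayout G lt φ}

/-- A stack layout is dispersable if the colouring is a proper edge-colouring. -/
def IsDispersableStackLayout {V : Type*} {k : ℕ} (G : SimpleGraph V)
    (lt : V → V → Prop) (φ : Sym2 V → Fin k) : Prop :=
  IsStackLayout G lt φ ∧
    ∀ u v w : V, G.Adj u v → G.Adj u w → v ≠ w → φ s(u, v) ≠ φ s(u, w)

/-- The dispersable stack-number of `G`. -/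
noncomputable def dispersableStackNumber {V : Type*} (G : SimpleGraph V) : ℕ :=
  sInf {k | ∃ (lt : V → V → Prop) (φ : Sym2 V → Fin k), IsDispersableStackLayout G lt φ}

/-- The star `S_b` with root `none` and leaves `some i`, `i : Fin b`. -/
def starGraph (b : ℕ) : SimpleGraph (Option (Fin b)) :=
  SimpleGraph.fromRel (fun v w => v = none ∧ w ≠ none)

/-- The triangulated grid `H_n` on vertex set `Fin n × Fin n` (0-indexed), with horizontal
edges `(x,y)(x+1,y)`, vertical edges `(x,y)(x,y+1)` and diagonal edges `(x,y)(x+1,y+1)`. -/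
def triGrid (n : ℕ) : SimpleGraph (Fin n × Fin n) :=
  SimpleGraph.fromRel (fun p q =>
    ((p.1 : ℕ) + 1 = (q.1 : ℕ) ∧ p.2 = q.2) ∨
    (p.1 = q.1 ∧ (p.2 : ℕ) + 1 = (q.2 : ℕ)) ∨
    ((p.1 : ℕ) + 1 = (q.1 : ℕ) ∧ (p.2 : ℕ) + 1 = (q.2 : ℕ)))


open Function Finset in
/-- Erdős–Szekeres (copied from the Mathlib archive). -/
theorem my_erdos_szekeres {α : Type*} [LinearOrder α] {r s n : ℕ} {f : Fin n → α}
    (hn : r * s < n) (hf : Function.Injective f) :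
    (∃ t : Finset (Fin n), r < #t ∧ StrictMonoOn f ↑t) ∨
      ∃ t : Finset (Fin n), s < #t ∧ StrictAntiOn f ↑t := by
  let inc_sequences_ending_in : Fin n → Finset (Finset (Fin n)) := fun i =>
    univ.powerset.filter fun t => Finset.max t = i ∧ StrictMonoOn f ↑t
  let dec_sequences_ending_in : Fin n → Finset (Finset (Fin n)) := fun i =>
    univ.powerset.filter fun t => Finset.max t = i ∧ StrictAntiOn f ↑t
  have inc_i : ∀ i, {i} ∈ inc_sequences_ending_in i := fun i => by
    simp [inc_sequences_ending_in, StrictMonoOn]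
  have dec_i : ∀ i, {i} ∈ dec_sequences_ending_in i := fun i => by
    simp [dec_sequences_ending_in, StrictAntiOn]
  let ab' : Fin n → ℕ × ℕ := by
    intro i
    apply
      (max' ((inc_sequences_ending_in i).image card) (Nonempty.image ⟨{i}, inc_i i⟩ _),
        max' ((dec_sequences_ending_in i).image card) (Nonempty.image ⟨{i}, dec_i i⟩ _))
  generalize hab : ab' = ab
  rsuffices ⟨i, hi⟩ : ∃ i, r < (ab i).1 ∨ s < (ab i).2
  · refine Or.imp ?_ ?_ hi
    on_goal 1 =>
      have : (ab i).1 ∈ image card (inc_sequences_ending_in i) := by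
        simp only [← hab]; exact max'_mem _ (Nonempty.image ⟨{i}, inc_i i⟩ _)
    on_goal 2 =>
      have : (ab i).2 ∈ image card (dec_sequences_ending_in i) := by
        simp only [← hab]; exact max'_mem _ (Nonempty.image ⟨{i}, dec_i i⟩ _)
    all_goals
      intro hi
      rw [mem_image] at this
      obtain ⟨t, ht₁, ht₂⟩ := this
      refine ⟨t, by rwa [ht₂], ?_⟩
      rw [mem_filter] at ht₁
      apply ht₁.2.2
  have : Injective ab := by
    simp only [← hab]
    apply Injective.of_lt_imp_ne
    intro i j k q
    injection q with q₁ q₂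
    cases lt_or_gt_of_ne fun _ => ne_of_lt ‹i < j› (hf ‹f i = f j›)
    on_goal 1 =>
      apply ne_of_lt _ q₁
      have : (ab' i).1 ∈ image card (inc_sequences_ending_in i) := by exact max'_mem _ (Nonempty.image ⟨{i}, inc_i i⟩ _)
    on_goal 2 =>
      apply ne_of_lt _ q₂
      have : (ab' i).2 ∈ image card (dec_sequences_ending_in i) := by exact max'_mem _ (Nonempty.image ⟨{i}, dec_i i⟩ _)
    all_goals
      rw [Nat.lt_iff_add_one_le]
      apply le_max'
      rw [mem_image] at this ⊢
      rcases this with ⟨t, ht₁, ht₂⟩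
      rw [mem_filter] at ht₁
      have : t.max = i := by simp only [ht₁.2.1]
      refine ⟨insert j t, ?_, ?_⟩
      · rw [mem_filter]
        refine ⟨?_, ?_, ?_⟩
        · rw [mem_powerset]; apply subset_univ
        · convert max_insert (a := j) (s := t)
          rw [ht₁.2.1, max_eq_left]
          apply WithBot.coe_le_coe.mpr (le_of_lt ‹i < j›)
        simp only [StrictMonoOn, StrictAntiOn, coe_insert, Set.mem_insert_iff, mem_coe]
        rintro x ⟨rfl | _⟩ y ⟨rfl | _⟩ _
        · apply (irrefl _ ‹j < j›).elim
        · exfalso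
          apply not_le_of_gt (_root_.trans ‹i < j› ‹j < y›) (le_max_of_eq ‹y ∈ t› ‹t.max = i›)
        · first
          | apply lt_of_le_of_lt _ ‹f i < f j›
          | apply lt_of_lt_of_le ‹f j < f i› _
          rcases lt_or_eq_of_le (le_max_of_eq ‹x ∈ t› ‹t.max = i›) with (_ | rfl)
          · apply le_of_lt (ht₁.2.2 ‹x ∈ t› (mem_of_max ‹t.max = i›) ‹x < i›)
          · rfl
        · apply ht₁.2.2 ‹x ∈ t› ‹y ∈ t› ‹x < y›
      · rw [card_insert_of_notMem, ht₂]
        intro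
        apply not_le_of_gt ‹i < j› (le_max_of_eq ‹j ∈ t› ‹t.max = i›)
  by_contra! q
  let ran : Finset (ℕ × ℕ) := (range r).image Nat.succ ×ˢ (range s).image Nat.succ
  have : image ab univ ⊆ ran := by
    rintro ⟨x₁, x₂⟩
    simp only [ran, mem_image, exists_prop, mem_range, mem_univ, mem_product, true_and,
      Prod.ext_iff]
    rintro ⟨i, rfl, rfl⟩
    specialize q i
    have z : 1 ≤ (ab i).1 ∧ 1 ≤ (ab i).2 := by
      simp only [← hab]
      constructor <;>
        · apply le_max'
          rw [mem_image]
          exact ⟨{i}, by solve_by_elim, card_singleton i⟩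
    exact ⟨⟨(ab i).1 - 1, by omega⟩, (ab i).2 - 1, by omega⟩
  apply not_le_of_gt hn
  simpa [ran, Nat.succ_injective, card_image_of_injective, ‹Injective ab›] using card_le_card this

/-- One Erdős–Szekeres step: extract a monotone subsequence of length about √m. -/
lemma es_step {β : Type*} [LinearOrder β] {m : ℕ} (f : Fin m → β) (hf : Function.Injective f) :
    ∃ (d : ℕ) (g : Fin d → Fin m), StrictMono g ∧ m ≤ d * d ∧
      (StrictMono (f ∘ g) ∨ StrictAnti (f ∘ g)) := by
  rcases Nat.eq_zero_or_pos m with rfl | hm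
  · exact ⟨0, Fin.elim0, fun i => i.elim0, le_refl 0, Or.inl fun i => i.elim0⟩
  set d := Nat.sqrt (m - 1) + 1 with hd
  have hd1 : d - 1 = Nat.sqrt (m - 1) := by omega
  have h1 : (d - 1) * (d - 1) < m := by
    rw [hd1]
    have := Nat.sqrt_le (m - 1)
    omega
  have h2 : m ≤ d * d := by
    have h := Nat.lt_succ_sqrt (m - 1)
    have he : Nat.succ (Nat.sqrt (m - 1)) = d := rfl
    rw [he] at h
    omega
  rcases my_erdos_szekeres (r := d - 1) (s := d - 1) h1 hf with ⟨t, ht, hmono⟩ | ⟨t, ht, hanti⟩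
  all_goals {
    have hdt : d ≤ t.card := by omega
    refine ⟨d, (t.orderEmbOfFin rfl) ∘ Fin.castLE hdt,
      (t.orderEmbOfFin rfl).strictMono.comp (Fin.strictMono_castLE hdt), h2, ?_⟩
    first
    | · left
        intro i j hij
        exact hmono (t.orderEmbOfFin_mem rfl _) (t.orderEmbOfFin_mem rfl _)
          ((t.orderEmbOfFin rfl).strictMono (Fin.strictMono_castLE hdt hij))
    | · right
        intro i j hij
        exact hanti (t.orderEmbOfFin_mem rfl _) (t.orderEmbOfFin_mem rfl _)
          ((t.orderEmbOfFin rfl).strictMono (Fin.strictMono_castLE hdt hij)) }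

lemma subseq_lemma (b n : ℕ)
    (lt : Option (Fin b) × (Fin n × Fin n) → Option (Fin b) × (Fin n × Fin n) → Prop)
    (hlt : IsStrictTotalOrder (Option (Fin b) × (Fin n × Fin n)) lt) :
    ∀ (ps : List (Fin n × Fin n)) (m : ℕ) (u : Fin m → Fin b), Function.Injective u →
      ∃ (d : ℕ) (g : Fin d → Fin m), StrictMono g ∧ m ≤ d ^ 2 ^ ps.length ∧
        ∀ p ∈ ps,
          (∀ i j : Fin d, i < j → lt (some (u (g i)), p) (some (u (g j)), p)) ∨
          (∀ i j : Fin d, i < j → lt (some (u (g j)), p) (some (u (g i)), p)) := by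
  intro ps
  induction ps with
  | nil =>
    intro m u _
    exact ⟨m, id, strictMono_id, by simp, by simp⟩
  | cons p ps ih =>
    intro m u hu
    obtain ⟨d, g, hg, hbound, hps⟩ := ih m u hu
    haveI := hlt
    haveI : DecidableRel lt := fun _ _ => Classical.dec _
    letI lo : LinearOrder (Option (Fin b) × (Fin n × Fin n)) := linearOrderOfSTO lt
    set f : Fin d → Option (Fin b) × (Fin n × Fin n) := fun i => (some (u (g i)), p) with hf
    have hfinj : Function.Injective f := by
      intro i j h
      apply hg.injective
      apply hu
      exact Option.some_injective _ (congrArg Prod.fst h)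
    obtain ⟨d', g', hg', hd', hmono⟩ := es_step f hfinj
    refine ⟨d', g ∘ g', hg.comp hg', ?_, ?_⟩
    · calc m ≤ d ^ 2 ^ ps.length := hbound
        _ ≤ (d' * d') ^ 2 ^ ps.length := Nat.pow_le_pow_left hd' _
        _ = d' ^ 2 ^ (p :: ps).length := by
            rw [← pow_two, ← pow_mul, List.length_cons, pow_succ, mul_comm]
    · intro q hq
      rcases List.mem_cons.mp hq with rfl | hq'
      · rcases hmono with h | h
        · exact Or.inl fun i j hij => h hij
        · exact Or.inr fun i j hij => h hij
      · rcases hps q hq' with h | h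
        · exact Or.inl fun i j hij => h _ _ (hg' hij)
        · exact Or.inr fun i j hij => h _ _ (hg' hij)

/-- Given a linear order `lt` on the vertices of `S_b □ H_n` and a set `L₂`
of `c` leaves, there is a sequence `u₁, …, u_d` of distinct leaves in `L₂` with
`d^(2^(n²-1)) ≥ c` such that for each vertex `p` of `H_n`, either
`(u₁,p) ≺ ⋯ ≺ (u_d,p)` or `(u₁,p) ≻ ⋯ ≻ (u_d,p)`. -/
theorem stmt7 (b n : ℕ)
    (lt : Option (Fin b) × (Fin n × Fin n) → Option (Fin b) × (Fin n × Fin n) → Prop)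
    (hlt : IsStrictTotalOrder (Option (Fin b) × (Fin n × Fin n)) lt)
    (L₂ : Finset (Fin b)) :
    ∃ (d : ℕ) (u : Fin d → Fin b),
      Function.Injective u ∧ (∀ i, u i ∈ L₂) ∧
      L₂.card ≤ d ^ (2 ^ (n ^ 2 - 1)) ∧
      ∀ p : Fin n × Fin n,
        (∀ i j : Fin d, i < j → lt (some (u i), p) (some (u j), p)) ∨
        (∀ i j : Fin d, i < j → lt (some (u j), p) (some (u i), p)) := by
  haveI := hlt
  rcases Nat.eq_zero_or_pos n with rfl | hn
  · refine ⟨L₂.card, fun i => L₂.orderEmbOfFin rfl i, ?_, ?_, by simp, ?_⟩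
    · exact fun i j h => (L₂.orderEmbOfFin rfl).injective h
    · exact fun i => L₂.orderEmbOfFin_mem rfl i
    · intro p
      exact p.1.elim0
  · set p₀ : Fin n × Fin n := (⟨0, hn⟩, ⟨0, hn⟩) with hp₀
    set r : Fin b → Fin b → Prop := fun q q' => lt (some q, p₀) (some q', p₀) with hrdef
    haveI : IsIrrefl (Fin b) r := ⟨fun a => irrefl_of lt _⟩
    haveI : IsTrans (Fin b) r := ⟨fun a b c h1 h2 => trans_of lt h1 h2⟩
    haveI : IsTrichotomous (Fin b) r := ⟨fun a c hac hca => by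
      rcases trichotomous_of lt ((some a, p₀) : Option (Fin b) × (Fin n × Fin n)) (some c, p₀)
        with h | h | h
      · exact absurd h hac
      · exact Option.some_injective _ (congrArg Prod.fst h)
      · exact absurd h hca⟩
    haveI : IsStrictTotalOrder (Fin b) r := {}
    haveI : DecidableRel r := fun _ _ => Classical.dec _
    letI lo : LinearOrder (Fin b) := linearOrderOfSTO r
    set c := L₂.card with hc
    let e := @Finset.orderEmbOfFin _ lo L₂ c hc.symm
    let u0 : Fin c → Fin b := fun i => e i
    have hu0inj : Function.Injective u0 := fun i j h => e.injective h
    have hu0mem : ∀ i, u0 i ∈ L₂ := fun i => @Finset.orderEmbOfFin_mem _ lo L₂ c hc.symm i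
    have hu0mono : ∀ i j : Fin c, i < j → r (u0 i) (u0 j) := fun i j h =>
      @OrderEmbedding.strictMono (Fin c) (Fin b) _ lo.toPreorder e i j h
    set ps : List (Fin n × Fin n) := ((Finset.univ : Finset (Fin n × Fin n)).erase p₀).toList
      with hpsdef
    have hlen : ps.length = n ^ 2 - 1 := by
      rw [hpsdef, Finset.length_toList, Finset.card_erase_of_mem (Finset.mem_univ _)]
      simp [pow_two]
    obtain ⟨d, g, hg, hbound, hps⟩ := subseq_lemma b n lt hlt ps c u0 hu0inj
    rw [hlen] at hbound
    refine ⟨d, u0 ∘ g, hu0inj.comp hg.injective, fun i => hu0mem _, hbound, ?_⟩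
    intro p
    by_cases hp : p = p₀
    · subst hp
      exact Or.inl fun i j hij => hu0mono _ _ (hg hij)
    · exact hps p (by rw [hpsdef, Finset.mem_toList, Finset.mem_erase]; exact ⟨hp, Finset.mem_univ _⟩)
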